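/- Let g : ℝ → ℝ be continuously differentiable, even, and π-periodic, let n ≥ 1, and define G(μ₀,…,μ_{n−1}) = (1/π) ∫_{-π/2}^{π/2} ∏_{i=0}^{n−1} g(x + μ_i) dx. Then for each i, ∂G/∂μ_i = (1/(2π)) ∫_{-π/2}^{π/2} g′(x) [∏_{j≠i} g(x + μ_j − μ_i) − ∏_{j≠i} g(x − μ_j + μ_i)] dx. -/

import Mathlib

open Real MeasureTheory intervalIntegral Metric

theorem stmt_15 (g : ℝ → ℝ) (hg : ContDiff ℝ 1 g)
    (heven : ∀ x, g (-x) = g x) (hper : ∀ x, g (x + π) = g x)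
    (n : ℕ) (hn : 1 ≤ n) (μ : Fin n → ℝ) (i : Fin n) :
    HasDerivAt
      (fun t => (1 / π) * ∫ x in (-(π/2))..(π/2), ∏ j : Fin n, g (x + Function.update μ i t j))
      ((1 / (2 * π)) * ∫ x in (-(π/2))..(π/2),
        deriv g x * ((∏ j ∈ Finset.univ.erase i, g (x + μ j - μ i))
          - ∏ j ∈ Finset.univ.erase i, g (x - μ j + μ i)))
      (μ i) := by
  have hgc : Continuous g := hg.continuous
  have hgd : Differentiable ℝ g := hg.differentiable one_ne_zero
  have hg'c : Continuous (deriv g) := hg.continuous_deriv le_rfl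
  -- deriv g is π-periodic
  have hper' : ∀ x, deriv g (x + π) = deriv g x := by
    intro x
    have h1 : HasDerivAt (fun y => g (y + π)) (deriv g (x + π)) x := by
      simpa [Function.comp_def] using ((hgd (x + π)).hasDerivAt).comp x ((hasDerivAt_id x).add_const π)
    have h2 : (fun y : ℝ => g (y + π)) = g := funext hper
    rw [h2] at h1
    exact (h1.deriv).symm
  -- deriv g is odd
  have hodd : ∀ x, deriv g (-x) = -deriv g x := by
    intro x
    have h1 : HasDerivAt (fun y => g (-y)) (deriv g (-x) * (-1)) x :=
      ((hgd (-x)).hasDerivAt).comp x (hasDerivAt_neg x)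
    have h2 : (fun y : ℝ => g (-y)) = g := funext heven
    rw [h2] at h1
    have := h1.deriv
    linarith [this]
  set P : ℝ → ℝ := fun x => ∏ j ∈ Finset.univ.erase i, g (x + μ j) with hP
  have hPc : Continuous P := by
    apply continuous_finset_prod
    intro j _
    exact hgc.comp (continuous_id.add continuous_const)
  -- product identity
  have hprod : ∀ t x, (∏ j : Fin n, g (x + Function.update μ i t j)) = g (x + t) * P x := by
    intro t x
    rw [← Finset.mul_prod_erase Finset.univ _ (Finset.mem_univ i), Function.update_self]
    congr 1
    exact Finset.prod_congr rfl fun j hj => by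
      rw [Function.update_of_ne (Finset.ne_of_mem_erase hj)]
  -- derivative under the integral
  set R : ℝ := π / 2 + |μ i| + 1 with hR
  obtain ⟨K, hK⟩ := (isCompact_Icc (a := -R) (b := R)).exists_bound_of_continuousOn
    hg'c.continuousOn
  have hab : -(π/2) ≤ (π/2) := by linarith [pi_pos]
  have key : HasDerivAt (fun t => ∫ x in (-(π/2))..(π/2), g (x + t) * P x)
      (∫ x in (-(π/2))..(π/2), deriv g (x + μ i) * P x) (μ i) := by
    have := intervalIntegral.hasDerivAt_integral_of_dominated_loc_of_deriv_le
      (F := fun t x => g (x + t) * P x) (F' := fun t x => deriv g (x + t) * P x)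
      (x₀ := μ i) (a := -(π/2)) (b := π/2) (μ := volume)
      (bound := fun x => K * |P x|) (s := ball (μ i) 1) (ball_mem_nhds _ one_pos)
      ?_ ?_ ?_ ?_ ?_ ?_
    · exact this.2
    · exact Filter.Eventually.of_forall fun t =>
        ((hgc.comp (continuous_id.add continuous_const)).mul hPc).aestronglyMeasurable
    · exact ((hgc.comp (continuous_id.add continuous_const)).mul hPc).intervalIntegrable _ _
    · exact ((hg'c.comp (continuous_id.add continuous_const)).mul hPc).aestronglyMeasurable
    · refine Filter.Eventually.of_forall fun x hx t ht => ?_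
      rw [Set.uIoc_of_le hab] at hx
      have hx1 : |x| ≤ π / 2 := by
        rw [abs_le]; exact ⟨hx.1.le, hx.2⟩
      have ht1 : |t - μ i| < 1 := by
        simpa [Real.dist_eq] using (mem_ball.mp ht)
      have hmem : x + t ∈ Set.Icc (-R) R := by
        have : |x + t| ≤ R := by
          have : |x + t| ≤ |x| + |t - μ i| + |μ i| := by
            have := abs_add_le (x + (t - μ i)) (μ i)
            have h2 := abs_add_le x (t - μ i)
            calc |x + t| = |x + (t - μ i) + μ i| := by ring_nf
            _ ≤ |x + (t - μ i)| + |μ i| := abs_add_le _ _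
            _ ≤ |x| + |t - μ i| + |μ i| := by linarith
          rw [hR]; linarith
        rwa [abs_le] at this
      have : ‖deriv g (x + t) * P x‖ = |deriv g (x + t)| * |P x| := abs_mul _ _
      rw [this]
      exact mul_le_mul_of_nonneg_right (hK _ hmem) (abs_nonneg _)
    · exact (continuous_const.mul hPc.abs).intervalIntegrable _ _
    · refine Filter.Eventually.of_forall fun x hx t ht => ?_
      have h1 : HasDerivAt (fun t => g (x + t)) (deriv g (x + t)) t := by
        simpa [Function.comp_def] using ((hgd (x + t)).hasDerivAt).comp t ((hasDerivAt_id t).const_add x)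
      exact h1.mul_const (P x)
  -- rewrite the function
  have hfun : (fun t => (1 / π) * ∫ x in (-(π/2))..(π/2),
      ∏ j : Fin n, g (x + Function.update μ i t j))
      = (fun t => (1 / π) * ∫ x in (-(π/2))..(π/2), g (x + t) * P x) := by
    funext t
    congr 1
    exact intervalIntegral.integral_congr fun x _ => hprod t x
  rw [hfun]
  -- the shifted integrand
  set h : ℝ → ℝ := fun x => deriv g x * ∏ j ∈ Finset.univ.erase i, g (x + μ j - μ i) with hh
  have hhc : Continuous h := by
    apply hg'c.mul
    apply continuous_finset_prod
    intro j _
    exact hgc.comp (by continuity)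
  have hhper : Function.Periodic h π := by
    intro x
    simp only [hh]
    rw [hper' x]
    congr 1
    refine Finset.prod_congr rfl fun j _ => ?_
    rw [show x + π + μ j - μ i = (x + μ j - μ i) + π by ring, hper]
  -- shift identity: I₀ = ∫ h
  have hshift : (∫ x in (-(π/2))..(π/2), deriv g (x + μ i) * P x)
      = ∫ x in (-(π/2))..(π/2), h x := by
    have e1 : (∫ x in (-(π/2))..(π/2), deriv g (x + μ i) * P x)
        = ∫ x in (-(π/2))..(π/2), h (x + μ i) := by
      refine intervalIntegral.integral_congr fun x _ => ?_
      simp only [hh, hP]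
      congr 1
      refine Finset.prod_congr rfl fun j _ => ?_
      congr 1; ring
    rw [e1, intervalIntegral.integral_comp_add_right]
    have := hhper.intervalIntegral_add_eq (-(π/2) + μ i) (-(π/2))
    rw [show -(π/2) + μ i + π = π/2 + μ i by ring, show -(π/2) + π = π/2 by ring] at this
    exact this
  -- reflection identity
  have hQc : Continuous (fun x => deriv g x * ∏ j ∈ Finset.univ.erase i, g (x - μ j + μ i)) := by
    apply hg'c.mul
    apply continuous_finset_prod
    intro j _
    exact hgc.comp (by continuity)
  have hrefl : (∫ x in (-(π/2))..(π/2),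
      deriv g x * ∏ j ∈ Finset.univ.erase i, g (x - μ j + μ i))
      = -∫ x in (-(π/2))..(π/2), h x := by
    have e1 : (∫ x in (-(π/2))..(π/2), h (-x)) = ∫ x in (-(π/2))..(π/2), h x := by
      rw [intervalIntegral.integral_comp_neg]
      norm_num
    have e2 : ∀ x : ℝ, h (-x) = -(deriv g x * ∏ j ∈ Finset.univ.erase i, g (x - μ j + μ i)) := by
      intro x
      simp only [hh]
      rw [hodd]
      have : (∏ j ∈ Finset.univ.erase i, g (-x + μ j - μ i))
          = ∏ j ∈ Finset.univ.erase i, g (x - μ j + μ i) := by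
        refine Finset.prod_congr rfl fun j _ => ?_
        rw [show -x + μ j - μ i = -(x - μ j + μ i) by ring, heven]
      rw [this]; ring
    rw [← e1, intervalIntegral.integral_congr (fun x _ => e2 x),
      intervalIntegral.integral_neg, neg_neg]
  -- final value computation
  have hval : ((1 / (2 * π)) * ∫ x in (-(π/2))..(π/2),
      deriv g x * ((∏ j ∈ Finset.univ.erase i, g (x + μ j - μ i))
        - ∏ j ∈ Finset.univ.erase i, g (x - μ j + μ i)))
      = (1 / π) * ∫ x in (-(π/2))..(π/2), deriv g (x + μ i) * P x := by
    have esplit : (∫ x in (-(π/2))..(π/2),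
        deriv g x * ((∏ j ∈ Finset.univ.erase i, g (x + μ j - μ i))
          - ∏ j ∈ Finset.univ.erase i, g (x - μ j + μ i)))
        = (∫ x in (-(π/2))..(π/2), h x)
          - ∫ x in (-(π/2))..(π/2),
            deriv g x * ∏ j ∈ Finset.univ.erase i, g (x - μ j + μ i) := by
      rw [← intervalIntegral.integral_sub (hhc.intervalIntegrable _ _)
        (hQc.intervalIntegrable _ _)]
      refine intervalIntegral.integral_congr fun x _ => ?_
      simp only [hh]; ring
    rw [esplit, hrefl, hshift]
    have hpi : (π : ℝ) ≠ 0 := pi_ne_zero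
    field_simp
    ring
  rw [hval]
  exact key.const_mul (1 / π)
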